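/- Let R be a commutative ring, I an ideal of R, and M a finitely generated faithful multiplication R-module (i.e. M is finitely generated, has zero annihilator, and every submodule N of M satisfies N = (N : M)M). Let P be a proper submodule of M with I(P : M) = (IP : M). Then P is an I-primary submodule of M if and only if for all submodules N and K of M with NK ⊆ P and NK ⊄ IP (where NK denotes the product submodule (N : M)(K : M)M), one has N ⊆ P or K ⊆ √(P : M)M. -/

import Mathlib

/-- `P` is an `I`-primary submodule of `M`. -/
def IsIPrimary {R : Type*} [CommRing R] {M : Type*} [AddCommGroup M] [Module R M]
    (I : Ideal R) (P : Submodule R M) : Prop :=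
  P ≠ ⊤ ∧ ∀ r : R, ∀ m : M, r • m ∈ P → r • m ∉ I • P →
    m ∈ P ∨ r ∈ (P.colon ⊤).radical

/-- The product `N K` of two submodules of a multiplication module `M`,
defined as `(N : M)(K : M) M`. -/
def submoduleProd {R : Type*} [CommRing R] {M : Type*} [AddCommGroup M] [Module R M]
    (N K : Submodule R M) : Submodule R M :=
  (N.colon ⊤ * K.colon ⊤) • (⊤ : Submodule R M)

/-- Determinant trick: if `M` is f.g. faithful and `r • M ⊆ J • M`, then `r ∈ √J`. -/
lemma aux_mem_radical {R : Type*} [CommRing R] {M : Type*} [AddCommGroup M] [Module R M]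
    (hfg : Module.Finite R M) (hfaithful : (⊤ : Submodule R M).annihilator = ⊥)
    {J : Ideal R} {r : R} (h : ∀ x : M, r • x ∈ J • (⊤ : Submodule R M)) : r ∈ J.radical := by
  obtain ⟨p, hmonic, -, hcoeff, haeval⟩ :=
    LinearMap.exists_monic_and_coeff_mem_pow_and_aeval_eq_zero_of_range_le_smul R
      (algebraMap R (Module.End R M) r) J (by
        rintro x ⟨y, rfl⟩
        simpa [Module.algebraMap_end_apply] using h y)
  have heval : Polynomial.eval r p = 0 := by
    have h0 : ∀ x : M, Polynomial.eval r p • x = 0 := by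
      intro x
      have := congrArg (fun f : Module.End R M => f x) haeval
      simpa [Polynomial.aeval_algebraMap_apply_eq_algebraMap_eval,
        Module.algebraMap_end_apply] using this
    have : Polynomial.eval r p ∈ (⊤ : Submodule R M).annihilator :=
      Submodule.mem_annihilator.2 fun x _ => h0 x
    simpa [hfaithful] using this
  refine ⟨p.natDegree, ?_⟩
  have hsum := Polynomial.eval_eq_sum_range (p := p) r
  rw [Finset.sum_range_succ, hmonic.coeff_natDegree, one_mul, heval] at hsum
  rw [eq_neg_of_add_eq_zero_right hsum.symm]
  refine neg_mem (Ideal.sum_mem _ fun i hi => Ideal.mul_mem_right _ _ ?_)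
  have hin : i < p.natDegree := Finset.mem_range.1 hi
  exact Ideal.pow_le_self (Nat.sub_ne_zero_of_lt hin) (hcoeff i)

theorem stmt12 {R : Type*} [CommRing R] {M : Type*} [AddCommGroup M] [Module R M]
    (I : Ideal R) (P : Submodule R M)
    (hfg : Module.Finite R M)
    (hfaithful : (⊤ : Submodule R M).annihilator = ⊥)
    (hmult : ∀ N : Submodule R M, (N.colon ⊤) • (⊤ : Submodule R M) = N)
    (hproper : P ≠ ⊤)
    (hIP : I * (P.colon ⊤) = (I • P).colon ⊤) :
    IsIPrimary I P ↔
      ∀ N K : Submodule R M, submoduleProd N K ≤ P → ¬ (submoduleProd N K ≤ I • P) →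
        N ≤ P ∨ K ≤ (P.colon ⊤).radical • (⊤ : Submodule R M) := by
  have hprod : ∀ N K : Submodule R M, submoduleProd N K = (K.colon ⊤) • N := by
    intro N K
    rw [submoduleProd, mul_comm, mul_smul, hmult N]
  constructor
  · rintro ⟨-, hprim⟩ N K hNKP hNKIP
    by_cases hN : N ≤ P
    · exact Or.inl hN
    right
    obtain ⟨n₀, hn₀N, hn₀P⟩ := Set.not_subset.1 fun h => hN h
    rw [hprod] at hNKP hNKIP
    -- Claim: any `s ∈ (K : M)` with `s • N ⊄ I • P` lies in the radical.
    have claim : ∀ s ∈ K.colon ⊤, (∃ n ∈ N, s • n ∉ I • P) → s ∈ (P.colon ⊤).radical := by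
      rintro s hs ⟨n₁, hn₁N, hn₁⟩
      have hsn₁P : s • n₁ ∈ P := hNKP (Submodule.smul_mem_smul hs hn₁N)
      rcases hprim s n₁ hsn₁P hn₁ with hn₁P | hrad
      · -- `n₁ ∈ P`; use `n₀ ∉ P`.
        by_cases hsn₀ : s • n₀ ∈ I • P
        · have hsumP : s • (n₀ + n₁) ∈ P :=
            hNKP (Submodule.smul_mem_smul hs (N.add_mem hn₀N hn₁N))
          have hsumIP : s • (n₀ + n₁) ∉ I • P := by
            rw [smul_add]
            intro hmem
            exact hn₁ (by simpa using (I • P).sub_mem hmem hsn₀)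
          rcases hprim s (n₀ + n₁) hsumP hsumIP with hP | hrad
          · exact absurd (by simpa using P.sub_mem hP hn₁P) hn₀P
          · exact hrad
        · have hsn₀P : s • n₀ ∈ P := hNKP (Submodule.smul_mem_smul hs hn₀N)
          rcases hprim s n₀ hsn₀P hsn₀ with hP | hrad
          · exact absurd hP hn₀P
          · exact hrad
      · exact hrad
    have key : ∀ s ∈ K.colon ⊤, s ∈ (P.colon ⊤).radical := by
      intro s hs
      by_cases hsN : ∃ n ∈ N, s • n ∉ I • P
      · exact claim s hs hsN
      push_neg at hsN
      -- `s • N ⊆ I • P`; find `t ∈ (K : M)` with `t • N ⊄ I • P`.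
      have : ¬ ∀ t ∈ K.colon ⊤, ∀ n ∈ N, t • n ∈ I • P := by
        intro hall
        exact hNKIP (Submodule.smul_le.2 hall)
      push_neg at this
      obtain ⟨t, ht, n, hnN, hn⟩ := this
      have htrad : t ∈ (P.colon ⊤).radical := claim t ht ⟨n, hnN, hn⟩
      have hst : s + t ∈ (P.colon ⊤).radical := by
        refine claim (s + t) ((K.colon ⊤).add_mem hs ht) ⟨n, hnN, ?_⟩
        rw [add_smul]
        intro hmem
        exact hn (by simpa using (I • P).sub_mem hmem (hsN n hnN))
      simpa using (P.colon ⊤).radical.sub_mem hst htrad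
    calc K = (K.colon ⊤) • ⊤ := (hmult K).symm
      _ ≤ (P.colon ⊤).radical • ⊤ := Submodule.smul_mono_left key
  · intro h
    refine ⟨hproper, fun r m hrm hrIP => ?_⟩
    set N : Submodule R M := Submodule.span R {m} with hNdef
    set K : Submodule R M := Ideal.span {r} • ⊤ with hKdef
    have hNK' : submoduleProd N K = Submodule.span R {r • m} := by
      rw [hprod]
      conv_lhs => rw [← hmult N]
      rw [← mul_smul, mul_comm, mul_smul, hmult K, hKdef, ← mul_smul, mul_comm, mul_smul,
        hmult N, hNdef, Submodule.span_smul_span]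
      simp
    have h1 : submoduleProd N K ≤ P := by
      rw [hNK', Submodule.span_le, Set.singleton_subset_iff]
      exact hrm
    have h2 : ¬ submoduleProd N K ≤ I • P := by
      rw [hNK']
      intro hle
      exact hrIP (hle (Submodule.mem_span_singleton_self _))
    rcases h N K h1 h2 with hNP | hKrad
    · exact Or.inl (hNP (Submodule.mem_span_singleton_self m))
    · right
      have hr : ∀ x : M, r • x ∈ (P.colon ⊤).radical • (⊤ : Submodule R M) := fun x =>
        hKrad (Submodule.smul_mem_smul (Ideal.mem_span_singleton_self r) trivial)
      have := aux_mem_radical hfg hfaithful hr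
      rwa [Ideal.radical_idem] at this
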